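/- (Proposition 1, concrete form: nonparametric identification of the stochastic block model up to relabeling.) Let p, q ∈ ℝ^r have strictly positive entries summing to one, and let (F_{z_1,z_2}) and (G_{z_1,z_2}), for z_1, z_2 ∈ {1,…,r}, be symmetric families of cumulative distribution functions on ℝ (F_{z_1,z_2} = F_{z_2,z_1} and G_{z_1,z_2} = G_{z_2,z_1}). Define F_z := Σ_{z'=1}^r F_{z,z'} p_{z'} and G_z := Σ_{z'=1}^r G_{z,z'} q_{z'}, and assume F_1,…,F_r are linearly independent and G_1,…,G_r are linearly independent. If for all x_1, x_2, x_3 ∈ ℝ both (i) Σ_{z=1}^r p_z F_z(x_1) F_z(x_2) F_z(x_3) = Σ_{z=1}^r q_z G_z(x_1) G_z(x_2) G_z(x_3) (three-star subgraph) and (ii) Σ_{z_1,z_2} p_{z_1} p_{z_2} F_{z_1}(x_1) F_{z_1,z_2}(x_2) F_{z_2}(x_3) = Σ_{z_1,z_2} q_{z_1} q_{z_2} G_{z_1}(x_1) G_{z_1,z_2}(x_2) G_{z_2}(x_3) (path subgraph on four nodes), then there exists a permutation σ of {1,…,r} such that q_{σ(z)} = p_z for all z and G_{σ(z_1),σ(z_2)}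 = F_{z_1,z_2} (pointwise) for all z_1, z_2. -/

import Mathlib

open Finset Filter

/-- `F` is the cumulative distribution function of a Borel probability measure on `ℝ`:
nondecreasing, right-continuous, with limit `0` at `-∞` and limit `1` at `+∞`. -/
def IsCDF (F : ℝ → ℝ) : Prop :=
  Monotone F ∧ (∀ x, ContinuousWithinAt F (Set.Ici x) x) ∧
    Filter.Tendsto F Filter.atBot (nhds 0) ∧ Filter.Tendsto F Filter.atTop (nhds 1)

private def LIfun {r : ℕ} (f : Fin r → ℝ → ℝ) : Prop :=
  ∀ c : Fin r → ℝ, (∀ x, ∑ i, c i * f i x = 0) → ∀ i, c i = 0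

private lemma li_of_linearIndependent {r : ℕ} {f : Fin r → ℝ → ℝ}
    (h : LinearIndependent ℝ f) : LIfun f := by
  intro c hc
  have := Fintype.linearIndependent_iff.mp h c ?_
  · exact this
  · funext x
    simpa [Finset.sum_apply, Pi.smul_apply, smul_eq_mul] using hc x

private lemma pairLI {r : ℕ} {f : Fin r → ℝ → ℝ} (h : LIfun f)
    (c : Fin r → Fin r → ℝ)
    (hc : ∀ x y, ∑ i, ∑ j, c i j * f i x * f j y = 0) : ∀ i j, c i j = 0 := by
  have key : ∀ i, ∀ y, ∑ j, c i j * f j y = 0 := by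
    intro i y
    refine h (fun i => ∑ j, c i j * f j y) (fun x => ?_) i
    rw [← hc x y]
    refine Finset.sum_congr rfl fun i _ => ?_
    rw [Finset.sum_mul]
    exact Finset.sum_congr rfl fun j _ => by ring
  intro i j
  exact h (c i) (key i) j

private lemma tripleLI {r : ℕ} {f : Fin r → ℝ → ℝ} (h : LIfun f)
    (c : Fin r → Fin r → Fin r → ℝ)
    (hc : ∀ x y z, ∑ i, ∑ j, ∑ k, c i j k * f i x * f j y * f k z = 0) :
    ∀ i j k, c i j k = 0 := by
  have key : ∀ i j, ∀ z, ∑ k, c i j k * f k z = 0 := by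
    intro i j z
    refine pairLI h (fun i j => ∑ k, c i j k * f k z) (fun x y => ?_) i j
    rw [← hc x y z]
    refine Finset.sum_congr rfl fun i _ => Finset.sum_congr rfl fun j _ => ?_
    rw [Finset.sum_mul, Finset.sum_mul]
    exact Finset.sum_congr rfl fun k _ => by ring
  intro i j k
  exact h (c i j) (key i j) k

private lemma mul_sum3 {r : ℕ} (c : ℝ) (f g h : Fin r → ℝ) :
    c * ((∑ i, f i) * (∑ j, g j) * (∑ k, h k))
      = ∑ i, ∑ j, ∑ k, c * f i * g j * h k := by
  rw [Finset.sum_mul_sum, Finset.sum_mul, Finset.mul_sum]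
  refine Finset.sum_congr rfl fun i _ => ?_
  rw [Finset.sum_mul, Finset.mul_sum]
  refine Finset.sum_congr rfl fun j _ => ?_
  rw [Finset.mul_sum, Finset.mul_sum]
  exact Finset.sum_congr rfl fun k _ => by ring

private lemma span_top_of_dual {r : ℕ} (s : Set (Fin r → ℝ))
    (h : ∀ w : Fin r → ℝ, (∀ u ∈ s, ∑ z, w z * u z = 0) → w = 0) :
    Submodule.span ℝ s = ⊤ := by
  by_contra hne
  have hlt : Submodule.span ℝ s < ⊤ := lt_top_iff_ne_top.mpr hne
  obtain ⟨φ, hφ0, hφ⟩ := (Submodule.span ℝ s).exists_dual_map_eq_bot_of_lt_top hlt inferInstance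
  have hvan : ∀ u ∈ Submodule.span ℝ s, φ u = 0 := by
    intro u hu
    have : φ u ∈ Submodule.map φ (Submodule.span ℝ s) := Submodule.mem_map_of_mem hu
    rw [hφ] at this
    simpa using this
  set w : Fin r → ℝ := fun z => φ (fun j => if z = j then 1 else 0) with hwdef
  have hrep : ∀ u : Fin r → ℝ, φ u = ∑ z, u z * w z := by
    intro u
    conv_lhs => rw [pi_eq_sum_univ u]
    rw [map_sum]
    exact Finset.sum_congr rfl fun z _ => by rw [map_smul, smul_eq_mul]
  have hw : w = 0 := by
    refine h _ fun u hu => ?_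
    have := hvan u (Submodule.subset_span hu)
    rw [hrep u] at this
    rw [← this]
    exact Finset.sum_congr rfl fun z _ => by ring
  apply hφ0
  apply LinearMap.ext
  intro u
  rw [hrep u, hw]
  simp

theorem sbm_nonparametric_identification {r : ℕ}
    (p q : Fin r → ℝ)
    (hp : ∀ z, 0 < p z) (hq : ∀ z, 0 < q z)
    (hps : ∑ z, p z = 1) (hqs : ∑ z, q z = 1)
    (F G : Fin r → Fin r → ℝ → ℝ)
    (hFcdf : ∀ z₁ z₂, IsCDF (F z₁ z₂)) (hGcdf : ∀ z₁ z₂, IsCDF (G z₁ z₂))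
    (hFsymm : ∀ z₁ z₂, F z₁ z₂ = F z₂ z₁) (hGsymm : ∀ z₁ z₂, G z₁ z₂ = G z₂ z₁)
    (hFind : LinearIndependent ℝ (fun z => fun x => ∑ z', F z z' x * p z'))
    (hGind : LinearIndependent ℝ (fun z => fun x => ∑ z', G z z' x * q z'))
    (hstar : ∀ x₁ x₂ x₃ : ℝ,
      ∑ z, p z * ((∑ z', F z z' x₁ * p z') * (∑ z', F z z' x₂ * p z')
          * (∑ z', F z z' x₃ * p z'))
        = ∑ z, q z * ((∑ z', G z z' x₁ * q z') * (∑ z', G z z' x₂ * q z')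
          * (∑ z', G z z' x₃ * q z')))
    (hpath : ∀ x₁ x₂ x₃ : ℝ,
      ∑ z₁, ∑ z₂, p z₁ * p z₂ * ((∑ z', F z₁ z' x₁ * p z') * F z₁ z₂ x₂
          * (∑ z', F z₂ z' x₃ * p z'))
        = ∑ z₁, ∑ z₂, q z₁ * q z₂ * ((∑ z', G z₁ z' x₁ * q z') * G z₁ z₂ x₂
          * (∑ z', G z₂ z' x₃ * q z'))) :
    ∃ σ : Equiv.Perm (Fin r),
      (∀ z, q (σ z) = p z) ∧ ∀ z₁ z₂, G (σ z₁) (σ z₂) = F z₁ z₂ := by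
  by_cases hr : r = 0
  · subst hr
    exact ⟨Equiv.refl _, fun z => z.elim0, fun z₁ => z₁.elim0⟩
  haveI : Nonempty (Fin r) := ⟨⟨0, Nat.pos_of_ne_zero hr⟩⟩
  set Fb : Fin r → ℝ → ℝ := fun z x => ∑ z', F z z' x * p z' with hFb
  set Gb : Fin r → ℝ → ℝ := fun w x => ∑ w', G w w' x * q w' with hGb
  have hFli : LIfun Fb := li_of_linearIndependent hFind
  have hGli : LIfun Gb := li_of_linearIndependent hGind
  -- limits at +∞
  have hFtend : ∀ z, Tendsto (Fb z) atTop (nhds 1) := by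
    intro z
    have : Tendsto (Fb z) atTop (nhds (∑ z' : Fin r, p z')) := by
      apply tendsto_finset_sum
      intro z' _
      simpa using ((hFcdf z z').2.2.2).mul_const (p z')
    rwa [hps] at this
  have hGtend : ∀ w, Tendsto (Gb w) atTop (nhds 1) := by
    intro w
    have : Tendsto (Gb w) atTop (nhds (∑ w' : Fin r, q w')) := by
      apply tendsto_finset_sum
      intro w' _
      simpa using ((hGcdf w w').2.2.2).mul_const (q w')
    rwa [hqs] at this
  -- the star equation in Fb/Gb form
  have hstar' : ∀ x₁ x₂ x₃ : ℝ,
      ∑ z, p z * (Fb z x₁ * Fb z x₂ * Fb z x₃)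
        = ∑ w, q w * (Gb w x₁ * Gb w x₂ * Gb w x₃) := hstar
  -- Step 1: each Fb z lies in the span of the Gb's
  have hmem : ∀ z, Fb z ∈ Submodule.span ℝ (Set.range Gb) := by
    set Φ : (Fin r → ℝ) →ₗ[ℝ] (ℝ → ℝ) :=
      { toFun := fun u => fun x => ∑ z, u z * Fb z x
        map_add' := by
          intro u v; funext x
          simp [add_mul, Finset.sum_add_distrib]
        map_smul' := by
          intro c u; funext x
          simp [Finset.mul_sum, mul_assoc] } with hΦ
    set s : Set (Fin r → ℝ) :=
      {u | ∃ x y : ℝ, u = fun z => p z * Fb z x * Fb z y} with hs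
    have hsU : ∀ u ∈ s, Φ u ∈ Submodule.span ℝ (Set.range Gb) := by
      rintro u ⟨x, y, rfl⟩
      have hΦu : Φ (fun z => p z * Fb z x * Fb z y)
          = fun x₁ => ∑ w, (q w * Gb w x * Gb w y) * Gb w x₁ := by
        funext x₁
        show ∑ z, (p z * Fb z x * Fb z y) * Fb z x₁ = _
        calc ∑ z, (p z * Fb z x * Fb z y) * Fb z x₁
            = ∑ z, p z * (Fb z x * Fb z y * Fb z x₁) := by
              exact Finset.sum_congr rfl fun z _ => by ring
          _ = ∑ w, q w * (Gb w x * Gb w y * Gb w x₁) := hstar' x y x₁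
          _ = ∑ w, (q w * Gb w x * Gb w y) * Gb w x₁ := by
              exact Finset.sum_congr rfl fun w _ => by ring
      rw [hΦu]
      have hfs : (fun x₁ => ∑ w, (q w * Gb w x * Gb w y) * Gb w x₁)
          = ∑ w, (q w * Gb w x * Gb w y) • Gb w := by
        funext x₁
        simp [Finset.sum_apply]
      rw [hfs]
      refine Submodule.sum_mem _ fun w _ => ?_
      exact Submodule.smul_mem _ _ (Submodule.subset_span ⟨w, rfl⟩)
    have hstop : Submodule.span ℝ s = ⊤ := by
      apply span_top_of_dual
      intro w hw
      have hw' : ∀ x y : ℝ, ∑ z, (w z * p z) * Fb z x * Fb z y = 0 := by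
        intro x y
        have := hw (fun z => p z * Fb z x * Fb z y) ⟨x, y, rfl⟩
        rw [← this]
        exact Finset.sum_congr rfl fun z _ => by ring
      have hdiag : ∀ i j : Fin r,
          (if i = j then w i * p i else 0) = 0 := by
        refine pairLI hFli (fun i j => if i = j then w i * p i else 0) ?_
        intro x y
        calc ∑ i, ∑ j, (if i = j then w i * p i else 0) * Fb i x * Fb j y
            = ∑ i, (w i * p i) * Fb i x * Fb i y := by
              refine Finset.sum_congr rfl fun i _ => ?_
              rw [Finset.sum_eq_single i]
              · simp
              · intro j _ hji
                simp [Ne.symm hji]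
              · simp
          _ = 0 := hw' x y
      funext z
      have := hdiag z z
      simp only [if_pos rfl] at this
      have hpz := (hp z).ne'
      have : w z * p z = 0 := this
      exact (mul_eq_zero.mp this).resolve_right hpz
    have hU : ∀ u : Fin r → ℝ, Φ u ∈ Submodule.span ℝ (Set.range Gb) := by
      have hle : Submodule.span ℝ s
          ≤ Submodule.comap Φ (Submodule.span ℝ (Set.range Gb)) :=
        Submodule.span_le.mpr fun u hu => hsU u hu
      rw [hstop] at hle
      exact fun u => hle Submodule.mem_top
    intro z
    have h1 : Φ (Pi.single z 1) = Fb z := by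
      funext x
      show ∑ z', (Pi.single z 1 : Fin r → ℝ) z' * Fb z' x = Fb z x
      rw [Finset.sum_eq_single z]
      · simp
      · intro j _ hji
        simp [Pi.single_apply, hji]
      · simp
    rw [← h1]
    exact hU _
  -- extract coefficients A
  have hmem' : ∀ z, ∃ c : Fin r → ℝ, ∑ w, c w • Gb w = Fb z := by
    intro z
    exact Submodule.mem_span_range_iff_exists_fun ℝ |>.mp (hmem z)
  choose A hA using hmem'
  have hAx : ∀ z x, ∑ w, A z w * Gb w x = Fb z x := by
    intro z x
    have := congrFun (hA z) x
    simpa [Finset.sum_apply] using this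
  -- row sums are 1
  have hrow : ∀ z, ∑ w, A z w = 1 := by
    intro z
    have h1 : Tendsto (fun x => ∑ w, A z w * Gb w x) atTop (nhds (∑ w, A z w)) := by
      have : Tendsto (fun x => ∑ w, A z w * Gb w x) atTop (nhds (∑ w : Fin r, A z w * 1)) := by
        apply tendsto_finset_sum
        intro w _
        exact (hGtend w).const_mul (A z w)
      simpa using this
    have h2 : Tendsto (fun x => ∑ w, A z w * Gb w x) atTop (nhds 1) := by
      have : (fun x => ∑ w, A z w * Gb w x) = Fb z := funext fun x => hAx z x
      rw [this]; exact hFtend z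
    exact tendsto_nhds_unique h1 h2
  -- third-order coefficient identity
  have hT : ∀ w₁ w₂ w₃, ∑ z, p z * A z w₁ * A z w₂ * A z w₃
      = if w₁ = w₂ ∧ w₁ = w₃ then q w₁ else 0 := by
    have key := tripleLI hGli
      (fun w₁ w₂ w₃ => (∑ z, p z * A z w₁ * A z w₂ * A z w₃)
        - (if w₁ = w₂ ∧ w₁ = w₃ then q w₁ else 0)) ?_
    · intro w₁ w₂ w₃
      have := key w₁ w₂ w₃
      linarith [this]
    intro x y t
    have expand : ∀ i j k : Fin r,
        ((∑ z, p z * A z i * A z j * A z k)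
          - (if i = j ∧ i = k then q i else 0)) * Gb i x * Gb j y * Gb k t
        = (∑ z, p z * A z i * A z j * A z k * Gb i x * Gb j y * Gb k t)
          - (if i = j ∧ i = k then q i else 0) * Gb i x * Gb j y * Gb k t := by
      intro i j k
      rw [sub_mul, sub_mul, sub_mul, Finset.sum_mul, Finset.sum_mul, Finset.sum_mul]
    simp only [expand]
    simp only [Finset.sum_sub_distrib]
    rw [sub_eq_zero]
    -- LHS: the quadruple sum equals ∑ z, p z * Fb z x * Fb z y * Fb z t
    have lhs_eq : ∑ i, ∑ j, ∑ k, ∑ z,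
        p z * A z i * A z j * A z k * Gb i x * Gb j y * Gb k t
        = ∑ z, p z * (Fb z x * Fb z y * Fb z t) := by
      calc ∑ i, ∑ j, ∑ k, ∑ z, p z * A z i * A z j * A z k * Gb i x * Gb j y * Gb k t
          = ∑ i, ∑ j, ∑ z, ∑ k, p z * A z i * A z j * A z k * Gb i x * Gb j y * Gb k t :=
            Finset.sum_congr rfl fun i _ => Finset.sum_congr rfl fun j _ =>
              Finset.sum_comm
        _ = ∑ i, ∑ z, ∑ j, ∑ k, p z * A z i * A z j * A z k * Gb i x * Gb j y * Gb k t :=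
            Finset.sum_congr rfl fun i _ => Finset.sum_comm
        _ = ∑ z, ∑ i, ∑ j, ∑ k, p z * A z i * A z j * A z k * Gb i x * Gb j y * Gb k t :=
            Finset.sum_comm
        _ = ∑ z, p z * (Fb z x * Fb z y * Fb z t) := by
            refine Finset.sum_congr rfl fun z _ => ?_
            rw [← hAx z x, ← hAx z y, ← hAx z t,
              mul_sum3 (p z) (fun i => A z i * Gb i x) (fun j => A z j * Gb j y)
                (fun k => A z k * Gb k t)]
            refine Finset.sum_congr rfl fun i _ => ?_
            refine Finset.sum_congr rfl fun j _ => ?_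
            refine Finset.sum_congr rfl fun k _ => ?_
            ring
    have rhs_eq : ∑ i, ∑ j, ∑ k,
        (if i = j ∧ i = k then q i else 0) * Gb i x * Gb j y * Gb k t
        = ∑ w, q w * (Gb w x * Gb w y * Gb w t) := by
      refine Finset.sum_congr rfl fun i _ => ?_
      rw [Finset.sum_eq_single i]
      · rw [Finset.sum_eq_single i]
        · simp; ring
        · intro k _ hk
          simp [Ne.symm hk]
        · simp
      · intro j _ hj
        refine Finset.sum_eq_zero fun k _ => ?_
        simp [Ne.symm hj]
      · simp
    rw [lhs_eq, rhs_eq]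
    exact hstar' x y t
  -- second-order identity
  have hS : ∀ w₁ w₂, ∑ z, p z * A z w₁ * A z w₂ = if w₁ = w₂ then q w₁ else 0 := by
    intro w₁ w₂
    have hsum : ∑ w₃, ∑ z, p z * A z w₁ * A z w₂ * A z w₃
        = ∑ z, p z * A z w₁ * A z w₂ := by
      rw [Finset.sum_comm]
      refine Finset.sum_congr rfl fun z _ => ?_
      rw [← Finset.mul_sum, hrow z, mul_one]
    have hsum2 : ∑ w₃, (if w₁ = w₂ ∧ w₁ = w₃ then q w₁ else 0)
        = if w₁ = w₂ then q w₁ else 0 := by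
      by_cases h12 : w₁ = w₂
      · simp [h12]
      · simp [h12]
    rw [← hsum, ← hsum2]
    exact Finset.sum_congr rfl fun w₃ _ => hT w₁ w₂ w₃
  -- bilinear expansion helper
  have hBE : ∀ (d : Fin r → ℝ) (w'' : Fin r),
      ∑ z, p z * (∑ w', d w' * A z w') * A z w'' = d w'' * q w'' := by
    intro d w''
    calc ∑ z, p z * (∑ w', d w' * A z w') * A z w''
        = ∑ z, ∑ w', d w' * (p z * A z w' * A z w'') := by
          refine Finset.sum_congr rfl fun z _ => ?_
          rw [Finset.mul_sum, Finset.sum_mul]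
          exact Finset.sum_congr rfl fun w' _ => by ring
      _ = ∑ w', d w' * ∑ z, p z * A z w' * A z w'' := by
          rw [Finset.sum_comm]
          exact Finset.sum_congr rfl fun w' _ => by rw [Finset.mul_sum]
      _ = ∑ w', d w' * (if w' = w'' then q w' else 0) := by
          exact Finset.sum_congr rfl fun w' _ => by rw [hS w' w'']
      _ = d w'' * q w'' := by
          rw [Finset.sum_eq_single w'']
          · simp
          · intro w' _ hne; simp [hne]
          · simp
  -- columns of A are linearly independent
  set v : Fin r → (Fin r → ℝ) := fun w z => A z w with hv
  have hvli : LinearIndependent ℝ v := by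
    rw [Fintype.linearIndependent_iff]
    intro g hg w''
    have hg' : ∀ z, ∑ w', g w' * A z w' = 0 := by
      intro z
      have := congrFun hg z
      simpa [Finset.sum_apply] using this
    have h0 : ∑ z, p z * (∑ w', g w' * A z w') * A z w'' = 0 :=
      Finset.sum_eq_zero fun z _ => by rw [hg' z]; ring
    rw [hBE g w''] at h0
    exact (mul_eq_zero.mp h0).resolve_right (hq w'').ne'
  have hcard : Fintype.card (Fin r) = Module.finrank ℝ (Fin r → ℝ) := by
    simp [Module.finrank_fin_fun]
  set bas := basisOfLinearIndependentOfCardEqFinrank hvli hcard with hbasdef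
  have hbas : ⇑bas = v := coe_basisOfLinearIndependentOfCardEqFinrank hvli hcard
  -- idempotence of the entries of A
  have hidem : ∀ z w, A z w * A z w = A z w := by
    intro z₀ w
    set xw : Fin r → ℝ := fun z => A z w * A z w - A z w with hxw
    have hBx : ∀ w', ∑ z, p z * xw z * A z w' = 0 := by
      intro w'
      have e1 : ∑ z, p z * xw z * A z w'
          = (∑ z, p z * A z w * A z w * A z w') - ∑ z, p z * A z w * A z w' := by
        rw [← Finset.sum_sub_distrib]
        exact Finset.sum_congr rfl fun z _ => by simp only [hxw]; ring
      rw [e1, hT w w w', hS w w']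
      by_cases h : w = w' <;> simp [h]
    have hrepr := Module.Basis.sum_repr bas xw
    set d : Fin r → ℝ := fun w' => bas.repr xw w' with hd
    have hxwd : ∀ z, xw z = ∑ w', d w' * A z w' := by
      intro z
      have := congrFun hrepr z
      rw [← this]
      simp [Finset.sum_apply, hbas, hv, hd]
    have hd0 : ∀ w'', d w'' = 0 := by
      intro w''
      have e : ∑ z, p z * xw z * A z w'' = d w'' * q w'' := by
        calc ∑ z, p z * xw z * A z w''
            = ∑ z, p z * (∑ w', d w' * A z w') * A z w'' :=
              Finset.sum_congr rfl fun z _ => by rw [hxwd z]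
          _ = d w'' * q w'' := hBE d w''
      rw [hBx w''] at e
      exact (mul_eq_zero.mp e.symm).resolve_right (hq w'').ne'
    have hx0 : xw z₀ = 0 := by
      rw [hxwd z₀]
      exact Finset.sum_eq_zero fun w' _ => by rw [hd0 w']; ring
    have : A z₀ w * A z₀ w - A z₀ w = 0 := hx0
    linarith
  -- entries are 0 or 1
  have hA01 : ∀ z w, A z w = 0 ∨ A z w = 1 := by
    intro z w
    have h : A z w * (A z w - 1) = 0 := by
      have := hidem z w; ring_nf; nlinarith [hidem z w]
    rcases mul_eq_zero.mp h with h' | h'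
    · exact Or.inl h'
    · exact Or.inr (by linarith [sub_eq_zero.mp h'])
  -- each row contains a 1
  have hex : ∀ z, ∃ w, A z w = 1 := by
    intro z
    by_contra hno
    push_neg at hno
    have hz : ∀ w, A z w = 0 := fun w => (hA01 z w).resolve_right (hno w)
    have h0 : (1 : ℝ) = 0 := by
      rw [← hrow z]
      exact Finset.sum_eq_zero fun w _ => hz w
    norm_num at h0
  choose σ0 hσ0 using hex
  -- off-diagonal entries vanish
  have hoff : ∀ z w, w ≠ σ0 z → A z w = 0 := by
    intro z w hne
    have hsplit : A z (σ0 z) + ∑ w' ∈ Finset.univ.erase (σ0 z), A z w'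
        = ∑ w', A z w' := Finset.add_sum_erase Finset.univ (A z) (Finset.mem_univ _)
    have hrest : ∑ w' ∈ Finset.univ.erase (σ0 z), A z w' = 0 := by
      have h1 := hrow z
      rw [← hsplit, hσ0 z] at h1
      linarith
    have hnn : ∀ w' ∈ Finset.univ.erase (σ0 z), 0 ≤ A z w' := by
      intro w' _
      rcases hA01 z w' with h | h <;> simp [h]
    exact (Finset.sum_eq_zero_iff_of_nonneg hnn).mp hrest w
      (Finset.mem_erase.mpr ⟨hne, Finset.mem_univ w⟩)
  -- σ0 is bijective
  have hsurj : Function.Surjective σ0 := by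
    intro w₀
    by_contra hno
    push_neg at hno
    have hcol : ∀ z, A z w₀ = 0 := fun z => hoff z w₀ fun h => hno z h.symm
    have h1 := hS w₀ w₀
    rw [if_pos rfl] at h1
    have h2 : (0 : ℝ) = q w₀ := by
      rw [← h1]
      exact (Finset.sum_eq_zero fun z _ => by rw [hcol z]; ring).symm
    exact (hq w₀).ne' h2.symm
  have hbij : Function.Bijective σ0 := Function.Surjective.bijective_of_finite hsurj
  have hinj := hbij.injective
  -- weights match
  have hqp : ∀ z, q (σ0 z) = p z := by
    intro z
    have h1 := hS (σ0 z) (σ0 z)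
    rw [if_pos rfl] at h1
    rw [← h1, Finset.sum_eq_single z]
    · rw [hσ0 z]; ring
    · intro z' _ hz'
      have h0 : A z' (σ0 z) = 0 := hoff z' (σ0 z) fun h => hz' (hinj h.symm)
      rw [h0]; ring
    · simp
  -- marginals match
  have hFbGb : ∀ z x, Fb z x = Gb (σ0 z) x := by
    intro z x
    rw [← hAx z x, Finset.sum_eq_single (σ0 z)]
    · rw [hσ0 z]; ring
    · intro w _ hw
      rw [hoff z w hw]; ring
    · simp
  -- conclusion via the path equation
  have hpath' : ∀ x₁ x₂ x₃ : ℝ,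
      ∑ z₁, ∑ z₂, p z₁ * p z₂ * (Fb z₁ x₁ * F z₁ z₂ x₂ * Fb z₂ x₃)
        = ∑ w₁, ∑ w₂, q w₁ * q w₂ * (Gb w₁ x₁ * G w₁ w₂ x₂ * Gb w₂ x₃) := hpath
  have hedge : ∀ z₁ z₂ x₂, G (σ0 z₁) (σ0 z₂) x₂ = F z₁ z₂ x₂ := by
    intro z₁ z₂ x₂
    have key : ∀ i j : Fin r,
        p i * p j * (F i j x₂ - G (σ0 i) (σ0 j) x₂) = 0 := by
      refine pairLI hFli (fun i j => p i * p j * (F i j x₂ - G (σ0 i) (σ0 j) x₂)) ?_ 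
      intro x₁ x₃
      have hinner : ∀ i, ∑ w₂, q (σ0 i) * q w₂ * (Gb (σ0 i) x₁ * G (σ0 i) w₂ x₂ * Gb w₂ x₃)
          = ∑ j, p i * p j * (Fb i x₁ * G (σ0 i) (σ0 j) x₂ * Fb j x₃) := by
        intro i
        exact (Fintype.sum_bijective σ0 hbij
          (fun j => p i * p j * (Fb i x₁ * G (σ0 i) (σ0 j) x₂ * Fb j x₃))
          (fun w₂ => q (σ0 i) * q w₂ * (Gb (σ0 i) x₁ * G (σ0 i) w₂ x₂ * Gb w₂ x₃))
          (fun j => by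
            show p i * p j * (Fb i x₁ * G (σ0 i) (σ0 j) x₂ * Fb j x₃)
              = q (σ0 i) * q (σ0 j) * (Gb (σ0 i) x₁ * G (σ0 i) (σ0 j) x₂ * Gb (σ0 j) x₃)
            rw [hqp i, hqp j, ← hFbGb i x₁, ← hFbGb j x₃])).symm
      have hre : ∑ w₁, ∑ w₂, q w₁ * q w₂ * (Gb w₁ x₁ * G w₁ w₂ x₂ * Gb w₂ x₃)
          = ∑ i, ∑ j, p i * p j * (Fb i x₁ * G (σ0 i) (σ0 j) x₂ * Fb j x₃) := by
        refine ((Fintype.sum_bijective σ0 hbij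
          (fun i => ∑ w₂, q (σ0 i) * q w₂ * (Gb (σ0 i) x₁ * G (σ0 i) w₂ x₂ * Gb w₂ x₃))
          (fun w₁ => ∑ w₂, q w₁ * q w₂ * (Gb w₁ x₁ * G w₁ w₂ x₂ * Gb w₂ x₃))
          (fun i => rfl)).symm).trans ?_
        exact Finset.sum_congr rfl fun i _ => hinner i
      have hmain := hpath' x₁ x₂ x₃
      rw [hre] at hmain
      calc ∑ i, ∑ j, p i * p j * (F i j x₂ - G (σ0 i) (σ0 j) x₂) * Fb i x₁ * Fb j x₃
          = (∑ i, ∑ j, p i * p j * (Fb i x₁ * F i j x₂ * Fb j x₃))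
            - ∑ i, ∑ j, p i * p j * (Fb i x₁ * G (σ0 i) (σ0 j) x₂ * Fb j x₃) := by
            rw [← Finset.sum_sub_distrib]
            refine Finset.sum_congr rfl fun i _ => ?_
            rw [← Finset.sum_sub_distrib]
            exact Finset.sum_congr rfl fun j _ => by ring
        _ = 0 := by rw [hmain]; ring
    have hk := key z₁ z₂
    have hpp : p z₁ * p z₂ ≠ 0 := mul_ne_zero (hp z₁).ne' (hp z₂).ne'
    have : F z₁ z₂ x₂ - G (σ0 z₁) (σ0 z₂) x₂ = 0 := by
      rcases mul_eq_zero.mp hk with h | h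
      · exact absurd h hpp
      · exact h
    linarith
  exact ⟨Equiv.ofBijective σ0 hbij, hqp, fun z₁ z₂ => funext fun x₂ => hedge z₁ z₂ x₂⟩
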